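/- Let W̃ be an extended affine Weyl group with Bruhat order, μ a dominant coweight, and Adm(μ) the lower poset generated by the translation elements t_{λ} for λ in the W₀-orbit of μ. Suppose x ∈ Adm(μ) has length ℓ(t_μ) - 1 (codimension 1). Then there are at most two distinct λ ∈ W₀·μ with x ≤ t_λ. -/
import Mathlib

open scoped RealInnerProductSpace

/-- An affine reflection of a Euclidean space with unit normal `u` and constant `c`. -/
def IsAffineReflectionWith {V : Type*} [NormedAddCommGroup V] [InnerProductSpace ℝ V]
    (s : V → V) (u : V) (c : ℝ) : Prop :=
  ‖u‖ = 1 ∧ ∀ x, s x = x - (2 * (⟪x, u⟫ - c)) • u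

private lemma line_lemma {V : Type*} [NormedAddCommGroup V] [InnerProductSpace ℝ V]
    {u₁ u₂ : V} {c₁ c₂ : ℝ} {a b : V} (hu₁ : ‖u₁‖ = 1) (hu₂ : ‖u₂‖ = 1)
    (h : ∀ v : V, v + a - (2 * (⟪v + a, u₁⟫ - c₁)) • u₁
        = v + b - (2 * (⟪v + b, u₂⟫ - c₂)) • u₂) :
    ∃ δ : ℝ, b = a + δ • u₁ := by
  have h0 := h 0
  simp only [zero_add] at h0
  have key : ∀ v : V, (2 * ⟪v, u₁⟫) • u₁ = (2 * ⟪v, u₂⟫) • u₂ := by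
    intro v
    have h1 := h v
    rw [inner_add_left, inner_add_left] at h1
    linear_combination (norm := module) h0 - h1
  have hself : ⟪u₁, u₁⟫ = (1:ℝ) := by
    rw [real_inner_self_eq_norm_sq, hu₁]; norm_num
  have k1 := key u₁
  rw [hself] at k1
  set s := ⟪u₁, u₂⟫ with hs
  have hu12 : u₁ = s • u₂ := by
    have : (2:ℝ) • u₁ = (2 * s) • u₂ := by simpa using k1
    have := congrArg (fun w => (2:ℝ)⁻¹ • w) this
    simpa [smul_smul, mul_comm, mul_assoc] using this
  have hs0 : s ≠ 0 := by
    intro h'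
    rw [h', zero_smul] at hu12
    rw [hu12, norm_zero] at hu₁
    norm_num at hu₁
  have hu21 : u₂ = s⁻¹ • u₁ := by
    rw [hu12, smul_smul, inv_mul_cancel₀ hs0, one_smul]
  have h0' : b = a - (2 * (⟪a, u₁⟫ - c₁)) • u₁ + (2 * (⟪b, u₂⟫ - c₂)) • u₂ := by
    linear_combination (norm := module) -h0
  set e := 2 * (⟪b, u₂⟫ - c₂) with he
  rw [hu21, smul_smul] at h0'
  exact ⟨-(2 * (⟪a, u₁⟫ - c₁)) + e * s⁻¹, by rw [h0']; module⟩

private lemma delta_lemma {V : Type*} [NormedAddCommGroup V] [InnerProductSpace ℝ V]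
    {u a : V} (hu : ‖u‖ = 1) {δ : ℝ} (hnorm : ‖a + δ • u‖ = ‖a‖) :
    δ = 0 ∨ δ = -(2 * ⟪a, u⟫) := by
  have hsq : ‖a + δ • u‖ ^ 2 = ‖a‖ ^ 2 := by rw [hnorm]
  rw [norm_add_sq_real, real_inner_smul_right, norm_smul, hu, Real.norm_eq_abs] at hsq
  have h2 : δ * (δ + 2 * ⟪a, u⟫) = 0 := by
    have : |δ| ^ 2 = δ ^ 2 := sq_abs δ
    nlinarith [hsq]
  rcases mul_eq_zero.mp h2 with h | h
  · exact Or.inl h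
  · right; linarith

theorem admissible_codim_one_at_most_two_maximal
    {V : Type*} [NormedAddCommGroup V] [InnerProductSpace ℝ V] [FiniteDimensional ℝ V]
    {W : Type*} [Group W]
    (ρ : W →* Equiv.Perm V) (hfaith : Function.Injective ρ)
    (t : V → W) (ht : ∀ ν v, ρ (t ν) v = v + ν)
    (le : W → W → Prop) (len : W → ℕ)
    (hcov : ∀ x y : W, le x y → len x + 1 = len y →
      ∃ s : W, (∃ u c, IsAffineReflectionWith (ρ s) u c) ∧ x = s * y)
    (r : ℝ) (hr : 0 < r) (Λ : Set V) (hΛr : ∀ l ∈ Λ, ‖l‖ = r)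
    (L : ℕ) (hL : ∀ l ∈ Λ, len (t l) = L)
    (x : W) (hx : len x + 1 = L) :
    ∀ a ∈ Λ, ∀ b ∈ Λ, ∀ c ∈ Λ,
      le x (t a) → le x (t b) → le x (t c) → a = b ∨ a = c ∨ b = c := by
  have main : ∀ l ∈ Λ, le x (t l) →
      ∃ (u : V) (cl : ℝ), ‖u‖ = 1 ∧
        ∀ v, (ρ x) v = v + l - (2 * (⟪v + l, u⟫ - cl)) • u := by
    intro l hl hxl
    obtain ⟨s, ⟨u, cl, hu, hsu⟩, hxeq⟩ := hcov x (t l) hxl (by rw [hL l hl]; exact hx)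
    refine ⟨u, cl, hu, fun v => ?_⟩
    have : (ρ x) v = (ρ s) ((ρ (t l)) v) := by rw [hxeq, map_mul]; rfl
    rw [this, ht, hsu]
  intro a ha b hb c hc hxa hxb hxc
  obtain ⟨ua, ca, hua, hfa⟩ := main a ha hxa
  obtain ⟨ub, cb, hub, hfb⟩ := main b hb hxb
  obtain ⟨uc, cc, huc, hfc⟩ := main c hc hxc
  have hab : ∃ δ : ℝ, b = a + δ • ua :=
    line_lemma hua hub (fun v => by rw [← hfa v, ← hfb v])
  have hac : ∃ δ : ℝ, c = a + δ • ua :=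
    line_lemma hua huc (fun v => by rw [← hfa v, ← hfc v])
  obtain ⟨δb, hδb⟩ := hab
  obtain ⟨δc, hδc⟩ := hac
  by_cases h1 : a = b
  · exact Or.inl h1
  by_cases h2 : a = c
  · exact Or.inr (Or.inl h2)
  right; right
  have hnb : ‖a + δb • ua‖ = ‖a‖ := by rw [← hδb, hΛr b hb, hΛr a ha]
  have hnc : ‖a + δc • ua‖ = ‖a‖ := by rw [← hδc, hΛr c hc, hΛr a ha]
  have db := delta_lemma hua hnb
  have dc := delta_lemma hua hnc
  have hδb0 : δb ≠ 0 := by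
    intro h; apply h1; rw [hδb, h, zero_smul, add_zero]
  have hδc0 : δc ≠ 0 := by
    intro h; apply h2; rw [hδc, h, zero_smul, add_zero]
  have : δb = δc := by
    rcases db with h | h
    · exact absurd h hδb0
    · rcases dc with h' | h'
      · exact absurd h' hδc0
      · rw [h, h']
  rw [hδb, hδc, this]
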